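/- Let q = 2ⁿ with n odd, and set m = 2^{(n−1)/2} (so m = √(q/2)). Then the independence number of the Erdős–Rényi polarity graph satisfies α(ER_q) ≥ m·q − q + m, i.e. α(ER_q) ≥ q^{3/2}/√2 − q + √(q/2). -/

import Mathlib

open Projectivization

/-- Two points of `PG(2,q)`, `q` even, are conjugate with respect to the pseudo polarity
if the bilinear form `p₁q₁ + p₃q₂ + p₂q₃` vanishes (this is independent of the chosen
representatives). -/
def ConjEven {F : Type} [Field F] (P Q : Projectivization F (Fin 3 → F)) : Prop :=
  P.rep 0 * Q.rep 0 + P.rep 2 * Q.rep 1 + P.rep 1 * Q.rep 2 = 0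

/-- The Erdős–Rényi polarity graph `ER_q`, `q` even: vertices are the points of `PG(2,q)`,
two distinct points being adjacent when they are conjugate. -/
def ER (F : Type) [Field F] : SimpleGraph (Projectivization F (Fin 3 → F)) where
  Adj P Q := P ≠ Q ∧ ConjEven P Q
  symm := by
    constructor
    rintro P Q ⟨h1, h2⟩
    exact ⟨h1.symm, by unfold ConjEven at *; linear_combination h2⟩
  loopless := ⟨fun P h => h.1 rfl⟩

/-! ### Auxiliary material

We construct a large independent set explicitly.  Throughout, `F` is a finite field with
`2 ^ n` elements, `n = 2k + 1` odd.

Let `R = {v² + v : v ∈ F}`, an additive subgroup of index `2` with `1 ∉ R` (since `n` is odd,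
`F` contains no primitive cube root of unity).  We build, by a greedy/counting induction, an
`𝔽₂`-subspace `W ⊆ R` with `|W| = 2 ^ k = √(q/2)` such that all products of pairs of
elements of `W` lie in `R`.  Setting `Y = 1 + W`, all products `y * y'` (`y, y' ∈ Y`) lie
outside `R`.

The independent set is then
`S = { [x : 1 : x² y] : x ≠ 0, y ∈ Y } ∪ { [1 : 0 : 0] }`:
if `x x' + x² y + x'² y' = 0` then with `v = (x/x') y` one checks `v² + v = y y' ∈ R`,
a contradiction.  `S` has `(q - 1) √(q/2) + 1 ≥ m q - q + m` elements. -/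

/-- The set of values of the Artin–Schreier map `v ↦ v² + v`. -/
def Rset (F : Type) [Field F] : Set F := {z | ∃ v : F, v * v + v = z}

lemma Rset_zero {F : Type} [Field F] : (0 : F) ∈ Rset F := ⟨0, by ring⟩

lemma Rset_pol {F : Type} [Field F] (a : F) : a * a + a ∈ Rset F := ⟨a, rfl⟩

lemma Rset_add {F : Type} [Field F] (h2 : (2 : F) = 0) {a b : F}
    (ha : a ∈ Rset F) (hb : b ∈ Rset F) : a + b ∈ Rset F := by
  obtain ⟨v, hv⟩ := ha
  obtain ⟨w, hw⟩ := hb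
  exact ⟨v + w, by linear_combination hv + hw + (v * w) * h2⟩

lemma Rset_sq {F : Type} [Field F] (h2 : (2 : F) = 0) {a : F}
    (ha : a ∈ Rset F) : a * a ∈ Rset F := by
  have h := Rset_add h2 (Rset_pol a) ha
  have e : a * a + a + a = a * a := by linear_combination a * h2
  rwa [e] at h

/-- Since `n` is odd, `3 ∤ 2^n - 1`, so `F` has no element of multiplicative order 3 and
hence `v² + v = 1` has no solution. -/
lemma one_notin_Rset {F : Type} [Field F] [Fintype F] {n : ℕ} (hn : Odd n)
    (hF : Fintype.card F = 2 ^ n) (h2 : (2 : F) = 0) : (1 : F) ∉ Rset F := by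
  classical
  rintro ⟨v, hv⟩
  have hv3 : v * (v * v) = 1 := by linear_combination (v - 1) * hv + (v - 1) * h2
  have hvne : v ≠ 1 := by
    rintro rfl
    have h1 : (1 : F) = 0 := by linear_combination h2 - hv
    exact one_ne_zero h1
  set u : Fˣ := ⟨v, v * v, hv3, by linear_combination hv3⟩ with hu
  have hu3 : u ^ 3 = 1 := by
    ext
    push_cast [hu]
    linear_combination hv3
  have hune : u ≠ 1 := by
    intro h
    exact hvne (congrArg Units.val h)
  haveI : Fact (Nat.Prime 3) := ⟨by norm_num⟩
  have horder : orderOf u = 3 := orderOf_eq_prime hu3 hune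
  have hdvd : orderOf u ∣ Fintype.card Fˣ := orderOf_dvd_card
  rw [horder, Fintype.card_units, hF] at hdvd
  obtain ⟨l, hl⟩ := hn
  have h4 : 4 ^ l % 3 = 1 := by
    rw [Nat.pow_mod]
    norm_num
  have h2n : 2 ^ n % 3 = 2 := by
    subst hl
    rw [pow_succ, pow_mul]
    rw [Nat.mul_mod, Nat.pow_mod]
    norm_num [h4]
  have hge : 1 ≤ 2 ^ n := Nat.one_le_two_pow
  omega

/-- Counting facts about `R`: the complement of `R` is `1 + R`, and `R` contains `2^(n-1)`
elements. -/
lemma Rset_facts {F : Type} [Field F] [Fintype F] {n : ℕ} (hn : Odd n)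
    (hF : Fintype.card F = 2 ^ n) (h2 : (2 : F) = 0) :
    (∀ a : F, a ∉ Rset F → 1 + a ∈ Rset F) ∧
      ∀ Rf' : Finset F, (∀ a : F, a ∈ Rf' ↔ a ∈ Rset F) → 2 ^ (n - 1) ≤ Rf'.card := by
  classical
  set f : F → F := fun v => v * v + v with hf
  set Rf : Finset F := Finset.univ.image f with hRf
  have hmem : ∀ a : F, a ∈ Rf ↔ a ∈ Rset F := by
    intro a
    simp [hRf, Finset.mem_image, Rset, hf]
  have hfiber : ∀ a ∈ Finset.univ.image f,
      (Finset.univ.filter fun x : F => f x = a).card ≤ 2 := by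
    intro a ha
    obtain ⟨v, -, hv⟩ := Finset.mem_image.mp ha
    have hsub : (Finset.univ.filter fun x : F => f x = a) ⊆ {v, v + 1} := by
      intro x hx
      have hx2 : x * x + x = a := by
        simpa [hf] using (Finset.mem_filter.mp hx).2
      have hv2 : v * v + v = a := by simpa [hf] using hv
      have hu : (x + v) * ((x + v) + 1) = 0 := by
        linear_combination hx2 - hv2 + (x * v + v * v + v) * h2
      rcases mul_eq_zero.mp hu with h0 | h1
      · have : x = v := by linear_combination h0 - v * h2
        simp [this]
      · have : x = v + 1 := by linear_combination h1 - (v + 1) * h2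
        simp [this]
    calc (Finset.univ.filter fun x : F => f x = a).card ≤ ({v, v + 1} : Finset F).card :=
          Finset.card_le_card hsub
      _ ≤ 2 := Finset.card_insert_le _ _ |>.trans (by simp)
  have hbig : Fintype.card F ≤ 2 * Rf.card := by
    have h := Finset.card_le_mul_card_image (f := f) Finset.univ 2 hfiber
    rwa [Finset.card_univ] at h
  have hinj1 : Function.Injective (fun r : F => 1 + r) := fun a b h => by
    simpa using h
  have hdisj : Disjoint Rf (Rf.image (fun r => 1 + r)) := by
    rw [Finset.disjoint_left]
    intro a haR haI
    obtain ⟨r, hr, hra⟩ := Finset.mem_image.mp haI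
    have h1R : (1 : F) ∈ Rset F := by
      have e : (1 : F) = a + r := by linear_combination hra - r * h2
      rw [e]
      exact Rset_add h2 ((hmem a).mp haR) ((hmem r).mp hr)
    exact one_notin_Rset hn hF h2 h1R
  have hcard_le : 2 * Rf.card ≤ 2 ^ n := by
    have hle := Finset.card_le_univ (Rf ∪ Rf.image (fun r => 1 + r))
    rw [Finset.card_union_of_disjoint hdisj, Finset.card_image_of_injective _ hinj1,
      hF] at hle
    omega
  have hn1 : 1 ≤ n := hn.pos
  have hpow : 2 ^ n = 2 * 2 ^ (n - 1) := by
    conv_lhs => rw [show n = (n - 1) + 1 by omega]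
    rw [pow_succ]
    ring
  have hRcard : Rf.card = 2 ^ (n - 1) := by
    rw [hF] at hbig
    omega
  refine ⟨?_, ?_⟩
  swap
  · intro Rf' hmemf
    have : Rf' = Rf := by
      ext a
      rw [hmemf a, hmem a]
    rw [this, hRcard]
  -- complement statement
  intro a ha
  have huniv : Rf ∪ Rf.image (fun r => 1 + r) = Finset.univ := by
    apply Finset.eq_univ_of_card
    rw [Finset.card_union_of_disjoint hdisj, Finset.card_image_of_injective _ hinj1,
      hF, hRcard]
    omega
  
  have hamem : a ∈ Rf ∪ Rf.image (fun r => 1 + r) := by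
    rw [huniv]; exact Finset.mem_univ a
  rcases Finset.mem_union.mp hamem with h | h
  · exact absurd ((hmem a).mp h) ha
  · obtain ⟨r, hr, hra⟩ := Finset.mem_image.mp h
    have e : 1 + a = r := by linear_combination hra + (a - r) * h2
    rw [e]
    exact (hmem r).mp hr

/-- The key construction: an `𝔽₂`-subspace `W` of `F` of size `2^k`, contained in `R`,
all of whose pairwise products lie in `R`. -/
lemma exists_W {F : Type} [Field F] [Fintype F] {n k : ℕ} (hnk : n = 2 * k + 1)
    (hF : Fintype.card F = 2 ^ n) (h2 : (2 : F) = 0) :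
    ∃ W : Finset F, W.card = 2 ^ k ∧ (∀ w ∈ W, w ∈ Rset F) ∧
      (∀ w ∈ W, ∀ w' ∈ W, w * w' ∈ Rset F) := by
  classical
  have hn : Odd n := ⟨k, by omega⟩
  obtain ⟨hcompl, hbase⟩ := Rset_facts hn hF h2
  suffices h : ∀ j, j ≤ k → ∃ W : Finset F, W.card = 2 ^ j ∧ (0 : F) ∈ W ∧
      (∀ w ∈ W, ∀ w' ∈ W, w + w' ∈ W) ∧ (∀ w ∈ W, w ∈ Rset F) ∧
      (∀ w ∈ W, ∀ w' ∈ W, w * w' ∈ Rset F) ∧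
      2 ^ (n - 1 - j) ≤
        (Finset.univ.filter (fun z : F => z ∈ Rset F ∧ ∀ w ∈ W, z * w ∈ Rset F)).card by
    obtain ⟨W, h1, -, -, h4, h5, -⟩ := h k le_rfl
    exact ⟨W, h1, h4, h5⟩
  intro j
  induction j with
  | zero =>
    intro _
    refine ⟨{0}, by simp, by simp, by simp, ?_, ?_, ?_⟩
    · intro w hw
      rw [Finset.mem_singleton] at hw
      subst hw
      exact Rset_zero
    · intro w hw w' hw'
      rw [Finset.mem_singleton] at hw hw'
      subst hw; subst hw'
      simpa using Rset_zero
    · refine le_trans (hbase (Finset.univ.filter (fun z : F => z ∈ Rset F))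
        (fun a => by simp)) (Finset.card_le_card ?_)
      intro z hz
      refine Finset.mem_filter.mpr ⟨Finset.mem_univ _, (Finset.mem_filter.mp hz).2, ?_⟩
      intro w hw
      rw [Finset.mem_singleton] at hw
      subst hw
      rw [mul_zero]
      exact Rset_zero
  | succ j ih =>
    intro hjk
    obtain ⟨W, hWcard, hW0, hWadd, hWR, hWmul, hWC⟩ := ih (by omega)
    set C : Finset F :=
      Finset.univ.filter (fun z : F => z ∈ Rset F ∧ ∀ w ∈ W, z * w ∈ Rset F) with hCdef
    have hlt : W.card < C.card := by
      have h1 : (2 : ℕ) ^ j < 2 ^ (n - 1 - j) :=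
        Nat.pow_lt_pow_right one_lt_two (by omega)
      omega
    obtain ⟨x, hxC, hxW⟩ : ∃ x ∈ C, x ∉ W := by
      by_contra hcon
      push_neg at hcon
      exact absurd (Finset.card_le_card fun a ha => hcon a ha) (not_le.mpr hlt)
    have hxC' := Finset.mem_filter.mp hxC
    have hxR : x ∈ Rset F := hxC'.2.1
    have hxmul : ∀ w ∈ W, x * w ∈ Rset F := hxC'.2.2
    set W' : Finset F := W ∪ W.image (fun w => x + w) with hW'def
    have hmem' : ∀ a : F, a ∈ W' ↔ (a ∈ W ∨ ∃ w ∈ W, a = x + w) := by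
      intro a
      rw [hW'def, Finset.mem_union, Finset.mem_image]
      apply or_congr_right
      constructor
      · rintro ⟨w, hw, hwa⟩
        exact ⟨w, hw, hwa.symm⟩
      · rintro ⟨w, hw, hwa⟩
        exact ⟨w, hw, hwa.symm⟩
    have hinjx : Function.Injective (fun w : F => x + w) := fun a b h => by
      simpa using h
    have hdisjU : Disjoint W (W.image fun w => x + w) := by
      rw [Finset.disjoint_left]
      intro a haW haI
      obtain ⟨w, hw, hwa⟩ := Finset.mem_image.mp haI
      have e : x = a + w := by linear_combination hwa - w * h2
      exact hxW (e ▸ hWadd a haW w hw)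
    have hcard' : W'.card = 2 ^ (j + 1) := by
      rw [hW'def, Finset.card_union_of_disjoint hdisjU,
        Finset.card_image_of_injective _ hinjx, hWcard, pow_succ]
      ring
    refine ⟨W', hcard', Finset.mem_union_left _ hW0, ?_, ?_, ?_, ?_⟩
    · -- additive closure
      intro w1 h1 w2 hw2
      rw [hmem'] at h1 hw2 ⊢
      rcases h1 with h1 | ⟨w, hw, rfl⟩ <;> rcases hw2 with h2' | ⟨w'', hw'', rfl⟩
      · exact Or.inl (hWadd _ h1 _ h2')
      · exact Or.inr ⟨w1 + w'', hWadd _ h1 _ hw'', by ring⟩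
      · exact Or.inr ⟨w + w2, hWadd _ hw _ h2', by ring⟩
      · refine Or.inl ?_
        have e : (x + w) + (x + w'') = w + w'' := by linear_combination x * h2
        exact e ▸ hWadd _ hw _ hw''
    · -- contained in R
      intro a ha
      rw [hmem'] at ha
      rcases ha with h | ⟨w, hw, rfl⟩
      · exact hWR _ h
      · exact Rset_add h2 hxR (hWR w hw)
    · -- products in R
      intro a ha b hb
      rw [hmem'] at ha hb
      rcases ha with ha | ⟨w, hw, rfl⟩ <;> rcases hb with hb | ⟨w'', hw'', rfl⟩
      · exact hWmul _ ha _ hb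
      · have e : a * (x + w'') = x * a + a * w'' := by ring
        rw [e]
        exact Rset_add h2 (hxmul a ha) (hWmul _ ha _ hw'')
      · have e : (x + w) * b = x * b + w * b := by ring
        rw [e]
        exact Rset_add h2 (hxmul b hb) (hWmul _ hw _ hb)
      · have e : (x + w) * (x + w'') = x * x + (x * w'' + (x * w + w * w'')) := by ring
        rw [e]
        exact Rset_add h2 (Rset_sq h2 hxR) (Rset_add h2 (hxmul _ hw'')
          (Rset_add h2 (hxmul _ hw) (hWmul _ hw _ hw'')))
    · -- counting
      set C' : Finset F := C.filter (fun z => z * x ∈ Rset F) with hC'def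
      have hsub : C' ⊆
          Finset.univ.filter (fun z : F => z ∈ Rset F ∧ ∀ w ∈ W', z * w ∈ Rset F) := by
        intro z hz
        obtain ⟨hzC, hzx⟩ := Finset.mem_filter.mp hz
        obtain ⟨-, hzR, hzW⟩ := Finset.mem_filter.mp hzC
        refine Finset.mem_filter.mpr ⟨Finset.mem_univ _, hzR, ?_⟩
        intro w hw
        rw [hmem'] at hw
        rcases hw with hw | ⟨w'', hw'', rfl⟩
        · exact hzW _ hw
        · have e : z * (x + w'') = z * x + z * w'' := by ring
          rw [e]
          exact Rset_add h2 hzx (hzW _ hw'')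
      have hkey : 2 ^ (n - 1 - (j + 1)) ≤ C'.card := by
        by_cases hall : ∀ z ∈ C, z * x ∈ Rset F
        · rw [hC'def, Finset.filter_true_of_mem hall]
          exact le_trans (Nat.pow_le_pow_right (by norm_num) (by omega)) hWC
        · push_neg at hall
          obtain ⟨c₀, hc₀C, hc₀x⟩ := hall
          have hCadd : ∀ z1 ∈ C, ∀ z2 ∈ C, z1 + z2 ∈ C := by
            intro z1 hz1 z2 hz2
            obtain ⟨-, h1R, h1W⟩ := Finset.mem_filter.mp hz1
            obtain ⟨-, h2R, h2W⟩ := Finset.mem_filter.mp hz2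
            refine Finset.mem_filter.mpr ⟨Finset.mem_univ _, Rset_add h2 h1R h2R, ?_⟩
            intro w hw
            have e : (z1 + z2) * w = z1 * w + z2 * w := by ring
            rw [e]
            exact Rset_add h2 (h1W _ hw) (h2W _ hw)
          have hmap : ∀ z ∈ C \ C', z + c₀ ∈ C' := by
            intro z hz
            obtain ⟨hzC, hzn⟩ := Finset.mem_sdiff.mp hz
            have hzx : z * x ∉ Rset F := by
              intro h
              exact hzn (Finset.mem_filter.mpr ⟨hzC, h⟩)
            refine Finset.mem_filter.mpr ⟨hCadd z hzC c₀ hc₀C, ?_⟩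
            have e : (z + c₀) * x = (1 + z * x) + (1 + c₀ * x) := by
              linear_combination -h2
            rw [e]
            exact Rset_add h2 (hcompl _ hzx) (hcompl _ hc₀x)
          have hinj2 : (C \ C').card ≤ C'.card := by
            apply Finset.card_le_card_of_injOn (fun z => z + c₀) hmap
            intro a _ b _ hab
            simpa using hab
          have hsplit : (C \ C').card + C'.card = C.card :=
            Finset.card_sdiff_add_card_eq_card (Finset.filter_subset _ C)
          have harith : 2 ^ (n - 1 - j) = 2 * 2 ^ (n - 1 - (j + 1)) := by
            conv_lhs => rw [show n - 1 - j = (n - 1 - (j + 1)) + 1 by omega]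
            rw [pow_succ]
            ring
          omega
      exact le_trans hkey (Finset.card_le_card hsub)

/-- Conjugacy of two explicitly given points, computed on representatives. -/
lemma conjEven_mk_iff {F : Type} [Field F] (v w : Fin 3 → F) (hv : v ≠ 0) (hw : w ≠ 0) :
    ConjEven (Projectivization.mk F v hv) (Projectivization.mk F w hw) ↔
      v 0 * w 0 + v 2 * w 1 + v 1 * w 2 = 0 := by
  obtain ⟨a, ha⟩ := Projectivization.exists_smul_eq_mk_rep F v hv
  obtain ⟨b, hb⟩ := Projectivization.exists_smul_eq_mk_rep F w hw
  unfold ConjEven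
  rw [← ha, ← hb]
  simp only [Pi.smul_apply, Units.smul_def, smul_eq_mul]
  constructor
  · intro h
    have hab : ((a : F) * b) * (v 0 * w 0 + v 2 * w 1 + v 1 * w 2) = 0 := by
      linear_combination h
    exact (mul_eq_zero.mp hab).resolve_left (mul_ne_zero a.ne_zero b.ne_zero)
  · intro h
    linear_combination ((a : F) * b) * h

/-- If `q = 2ⁿ` with `n` odd and `m = 2^{(n-1)/2} = √(q/2)`, then
`α(ER_q) ≥ m·q - q + m = q^{3/2}/√2 - q + √(q/2)`. -/
theorem alpha_ER_even_nonsquare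
    (n q m : ℕ) (hn : Odd n) (hq : q = 2 ^ n) (hm : m = 2 ^ ((n - 1) / 2))
    (F : Type) [Field F] [Fintype F] (hF : Fintype.card F = q) :
    ∃ S : Set (Projectivization F (Fin 3 → F)),
      (∀ P ∈ S, ∀ Q ∈ S, ¬ (ER F).Adj P Q) ∧
      m * q - q + m ≤ S.ncard := by
  classical
  obtain ⟨k, hk⟩ := hn
  have hn' : Odd n := ⟨k, hk⟩
  have hk' : (n - 1) / 2 = k := by omega
  have hF' : Fintype.card F = 2 ^ n := by rw [hF, hq]
  -- characteristic 2
  have h2 : (2 : F) = 0 := by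
    have hcast : ((Fintype.card F : ℕ) : F) = 0 := FiniteField.cast_card_eq_zero F
    rw [hF', Nat.cast_pow, Nat.cast_ofNat] at hcast
    exact pow_eq_zero_iff (by omega) |>.mp hcast
  obtain ⟨W, hWcard, hWR, hWmul⟩ := exists_W (by omega : n = 2 * k + 1) hF' h2
  set Y : Finset F := W.image (fun w => 1 + w) with hYdef
  have hYcard : Y.card = 2 ^ k := by
    rw [hYdef, Finset.card_image_of_injective _ (fun a b (h : 1 + a = 1 + b) => by
      simpa using h), hWcard]
  have hYprop : ∀ y ∈ Y, ∀ y' ∈ Y, y * y' ∉ Rset F := by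
    intro y hy y' hy'
    obtain ⟨w, hw, rfl⟩ := Finset.mem_image.mp hy
    obtain ⟨w', hw', rfl⟩ := Finset.mem_image.mp hy'
    rintro ⟨v, hv⟩
    obtain ⟨s, hs⟩ : w + w' + w * w' ∈ Rset F :=
      Rset_add h2 (Rset_add h2 (hWR w hw) (hWR w' hw')) (hWmul w hw w' hw')
    refine one_notin_Rset hn' hF' h2 ⟨v + s, ?_⟩
    linear_combination hv + hs + (v * s + w + w' + w * w') * h2
  -- the points
  have hv3ne : ∀ a c : F, (![a, 1, c] : Fin 3 → F) ≠ 0 := by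
    intro a c h
    have h1 := congrFun h 1
    simp at h1
  have hv1ne : (![1, 0, 0] : Fin 3 → F) ≠ 0 := by
    intro h
    have h1 := congrFun h 0
    simp at h1
  set P₀ : Projectivization F (Fin 3 → F) := Projectivization.mk F ![1, 0, 0] hv1ne with hP₀def
  set T : Finset (F × F) := (Finset.univ.erase (0 : F)) ×ˢ Y with hTdef
  set θ : F × F → Projectivization F (Fin 3 → F) :=
    fun p => Projectivization.mk F ![p.1, 1, p.1 * p.1 * p.2] (hv3ne _ _) with hθdef
  set SF : Finset (Projectivization F (Fin 3 → F)) := insert P₀ (T.image θ) with hSFdef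
  have hTmem : ∀ p : F × F, p ∈ T ↔ p.1 ≠ 0 ∧ p.2 ∈ Y := by
    intro p
    simp [hTdef, Finset.mem_product]
  -- non-conjugacy of the main family
  have hmain : ∀ x y x' y' : F, x ≠ 0 → x' ≠ 0 → y ∈ Y → y' ∈ Y →
      x * x' + (x * x * y) * 1 + 1 * (x' * x' * y') ≠ 0 := by
    intro x y x' y' hx hx' hy hy' heq
    apply hYprop y hy y' hy'
    refine ⟨x * x'⁻¹ * y, ?_⟩
    have hx'2 : x' * x' ≠ 0 := mul_ne_zero hx' hx'
    apply mul_right_cancel₀ hx'2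
    have e2 : x * x'⁻¹ * y * x' = x * y := by
      field_simp
    calc (x * x'⁻¹ * y * (x * x'⁻¹ * y) + x * x'⁻¹ * y) * (x' * x')
        = (x * x'⁻¹ * y * x') * (x * x'⁻¹ * y * x') + (x * x'⁻¹ * y * x') * x' := by ring
      _ = (x * y) * (x * y) + (x * y) * x' := by rw [e2]
      _ = y * y' * (x' * x') := by linear_combination y * heq - (x' * x' * y * y') * h2
  refine ⟨↑SF, ?_, ?_⟩
  · -- independence
    intro P hP Q hQ hAdj
    obtain ⟨hne, hconj⟩ : P ≠ Q ∧ ConjEven P Q := hAdj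
    rw [Finset.mem_coe, hSFdef, Finset.mem_insert] at hP hQ
    rcases hP with rfl | hP <;> rcases hQ with h | hQ
    · exact hne h.symm
    · -- P = P₀, Q in family
      obtain ⟨p, hpT, rfl⟩ := Finset.mem_image.mp hQ
      obtain ⟨hx, -⟩ := (hTmem p).mp hpT
      rw [hP₀def, hθdef, conjEven_mk_iff] at hconj
      simp [Matrix.cons_val_zero, Matrix.cons_val_one, Matrix.head_cons,
        Matrix.cons_val_two, Matrix.tail_cons] at hconj
      exact hx hconj
    · -- Q = P₀, P in family
      obtain ⟨p, hpT, rfl⟩ := Finset.mem_image.mp hP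
      obtain ⟨hx, -⟩ := (hTmem p).mp hpT
      rw [h, hP₀def, hθdef, conjEven_mk_iff] at hconj
      simp [Matrix.cons_val_zero, Matrix.cons_val_one, Matrix.head_cons,
        Matrix.cons_val_two, Matrix.tail_cons] at hconj
      exact hx hconj
    · -- both in family
      obtain ⟨p, hpT, rfl⟩ := Finset.mem_image.mp hP
      obtain ⟨p', hpT', rfl⟩ := Finset.mem_image.mp hQ
      obtain ⟨hx, hy⟩ := (hTmem p).mp hpT
      obtain ⟨hx', hy'⟩ := (hTmem p').mp hpT'
      rw [hθdef, conjEven_mk_iff] at hconj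
      simp only [Matrix.cons_val_zero, Matrix.cons_val_one, Matrix.head_cons,
        Matrix.cons_val_two, Matrix.tail_cons] at hconj
      exact hmain p.1 p.2 p'.1 p'.2 hx hx' hy hy' hconj
  · -- cardinality
    have hinj : Set.InjOn θ ↑T := by
      intro p hp p' hp' h
      rw [Finset.mem_coe] at hp hp'
      obtain ⟨hx, -⟩ := (hTmem p).mp hp
      obtain ⟨hx', -⟩ := (hTmem p').mp hp'
      rw [hθdef] at h
      obtain ⟨a, ha⟩ := (Projectivization.mk_eq_mk_iff F _ _ _ _).mp h
      have h1 := congrFun ha 1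
      have h0 := congrFun ha 0
      have h2' := congrFun ha 2
      simp only [Pi.smul_apply, Units.smul_def, smul_eq_mul, Matrix.cons_val_zero,
        Matrix.cons_val_one, Matrix.head_cons, Matrix.cons_val_two, Matrix.tail_cons] at h1 h0 h2'
      rw [mul_one] at h1
      rw [h1, one_mul] at h0 h2'
      have hyy : p'.2 = p.2 := by
        have hxx : p'.1 * p'.1 ≠ 0 := mul_ne_zero hx' hx'
        apply mul_left_cancel₀ hxx
        rw [h2', h0]
      exact Prod.ext h0 hyy |>.symm ▸ rfl
    have hP₀not : P₀ ∉ T.image θ := by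
      intro hmem
      obtain ⟨p, hpT, hpe⟩ := Finset.mem_image.mp hmem
      rw [hθdef, hP₀def] at hpe
      obtain ⟨a, ha⟩ := (Projectivization.mk_eq_mk_iff F _ _ _ _).mp hpe
      have h1 := congrFun ha 1
      simp [Units.smul_def] at h1
    rw [Set.ncard_coe_finset, hSFdef, Finset.card_insert_of_notMem hP₀not,
      Finset.card_image_of_injOn hinj, hTdef, Finset.card_product,
      Finset.card_erase_of_mem (Finset.mem_univ 0), Finset.card_univ, hF, hYcard]
    have hm' : m = 2 ^ k := by rw [hm, hk']
    rw [hm']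
    have hB1 : 1 ≤ 2 ^ k := Nat.one_le_two_pow
    have h2B : 2 * 2 ^ k ≤ q := by
      rw [hq]
      calc 2 * 2 ^ k = 2 ^ (k + 1) := by rw [pow_succ]; ring
        _ ≤ 2 ^ n := Nat.pow_le_pow_right (by norm_num) (by omega)
    have hAq : q ≤ 2 ^ k * q := Nat.le_mul_of_pos_left q (by omega)
    have e : (q - 1) * 2 ^ k = 2 ^ k * q - 2 ^ k := by
      rw [Nat.sub_mul, one_mul, mul_comm]
    rw [e]
    have gen : ∀ A B Q' : ℕ, 1 ≤ B → 2 * B ≤ Q' → Q' ≤ A → A - Q' + B ≤ A - B + 1 := by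
      intros
      omega
    exact gen (2 ^ k * q) (2 ^ k) q hB1 h2B hAq
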